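/- Let f, g ∈ ℂ[[u]][v] be Weierstrass polynomials. Then the intersection multiplicity i₀(f, g) = dim_ℂ(ℂ[[u]][v]/(f, g)) is finite if and only if f and g have no common non-unit divisor in ℂ[[u]][v]. -/

import Mathlib

open Polynomial

/-- The Sylvester matrix of `f` and `g`, regarded as polynomials of degree `m` and `n`
respectively (rows `0,…,n-1` carry the coefficients of `f`, rows `n,…,n+m-1` those of `g`). -/
noncomputable def sylvester {R : Type*} [CommRing R] (f g : Polynomial R) (m n : ℕ) :
    Matrix (Fin (n + m)) (Fin (n + m)) R :=
  Matrix.of fun i j =>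
    if (i : ℕ) < n then
      (if (i : ℕ) ≤ (j : ℕ) ∧ (j : ℕ) ≤ (i : ℕ) + m then f.coeff (m + i - j) else 0)
    else
      (if (i : ℕ) - n ≤ (j : ℕ) ∧ (j : ℕ) ≤ (i : ℕ) then g.coeff ((i : ℕ) - (j : ℕ)) else 0)

/-- The resultant of `f` and `g`, regarded as polynomials of degree `m` and `n`:
the determinant of the Sylvester matrix. -/
noncomputable def resultant {R : Type*} [CommRing R] (f g : Polynomial R) (m n : ℕ) : R :=
  (_root_.sylvester f g m n).det

/-- A Weierstrass polynomial: a monic polynomial in `v` over `ℂ[[u]]` all of whose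
non-leading coefficients vanish at `u = 0`. -/
def IsWeierstrass (f : Polynomial (PowerSeries ℂ)) : Prop :=
  f.Monic ∧ ∀ i < f.natDegree, PowerSeries.constantCoeff (R := ℂ) (f.coeff i) = 0

/-- The partial derivative `∂f/∂u`: the formal derivative of power series applied to
each coefficient of `f`. -/
noncomputable def pderivU (f : Polynomial (PowerSeries ℂ)) : Polynomial (PowerSeries ℂ) :=
  f.sum fun i c => Polynomial.C (PowerSeries.derivative ℂ c) * Polynomial.X ^ i

/-- The intersection multiplicity `i₀(f,g) = dim_ℂ ℂ[[u]][v]/(f,g)` (as `finrank`,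
which is `0` when the dimension is infinite). -/
noncomputable def interMult (f g : Polynomial (PowerSeries ℂ)) : ℕ :=
  Module.finrank ℂ (Polynomial (PowerSeries ℂ) ⧸ Ideal.span {f, g})

/-- The Milnor number `μ₀(f) = dim_ℂ ℂ[[u]][v]/(∂f/∂u, ∂f/∂v)` (as `finrank`,
which is `0` when the dimension is infinite). -/
noncomputable def milnor (f : Polynomial (PowerSeries ℂ)) : ℕ :=
  Module.finrank ℂ (Polynomial (PowerSeries ℂ) ⧸ Ideal.span {pderivU f, derivative f})

/-- `ℂ⟦u⟧` is infinite dimensional over `ℂ`. -/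
lemma aux_not_fin : ¬ Module.Finite ℂ (PowerSeries ℂ) := by
  intro h
  have hli : LinearIndependent ℂ (fun n : ℕ => (PowerSeries.X : PowerSeries ℂ) ^ n) := by
    rw [linearIndependent_iff']
    intro s a hsum n hn
    have h2 := congrArg (PowerSeries.coeff (R := ℂ) n) hsum
    rw [map_sum, map_zero] at h2
    simp only [map_smul, PowerSeries.coeff_X_pow, smul_eq_mul, mul_ite, mul_one, mul_zero] at h2
    rwa [Finset.sum_ite_eq s n a, if_pos hn] at h2
  have h1 : (Cardinal.aleph0 : Cardinal) ≤ Module.rank ℂ (PowerSeries ℂ) := by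
    simpa using hli.cardinal_le_rank
  exact absurd (h1.trans_lt (Module.rank_lt_aleph0 ℂ (PowerSeries ℂ))) (lt_irrefl _)

set_option synthInstance.maxHeartbeats 1000000 in
set_option maxHeartbeats 2000000 in
/-- Finiteness over `ℂ` passes to quotients by larger ideals. -/
lemma finite_quot_of_le {A : Type*} [CommRing A] [Algebra ℂ A] {I J : Ideal A} (h : I ≤ J)
    (hfin : Module.Finite ℂ (A ⧸ I)) : Module.Finite ℂ (A ⧸ J) := by
  haveI := hfin
  let L : (A ⧸ I) →ₗ[ℂ] A ⧸ J :=
    { toFun := Ideal.Quotient.factor h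
      map_add' := map_add _
      map_smul' := by
        intro c x
        obtain ⟨a, rfl⟩ := Ideal.Quotient.mk_surjective x
        simp only [RingHom.id_apply]
        rw [← Ideal.Quotient.mkₐ_eq_mk ℂ I, ← map_smul, Ideal.Quotient.mkₐ_eq_mk,
          Ideal.Quotient.factor_mk, Ideal.Quotient.factor_mk, ← Ideal.Quotient.mkₐ_eq_mk ℂ J,
          map_smul] }
  exact Module.Finite.of_surjective L (fun x => by
    obtain ⟨a, rfl⟩ := Ideal.Quotient.mk_surjective x
    exact ⟨Ideal.Quotient.mk I a, Ideal.Quotient.factor_mk h a⟩)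

set_option synthInstance.maxHeartbeats 1000000 in
set_option maxHeartbeats 2000000 in
/-- If an ideal of `ℂ⟦u⟧[v]` contains a monic polynomial and a power `C (u^k)`,
then the quotient is finite dimensional over `ℂ`. -/
lemma aux_span_finite (J : Ideal (Polynomial (PowerSeries ℂ)))
    {f : Polynomial (PowerSeries ℂ)} (hf : f.Monic) (hfJ : f ∈ J)
    {k : ℕ} (hXk : Polynomial.C ((PowerSeries.X : PowerSeries ℂ) ^ k) ∈ J) :
    Module.Finite ℂ (Polynomial (PowerSeries ℂ) ⧸ J) := by
  classical
  by_cases htop : J = ⊤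
  · haveI : Subsingleton (Polynomial (PowerSeries ℂ) ⧸ J) :=
      Ideal.Quotient.subsingleton_iff.mpr htop
    infer_instance
  have hk : k ≠ 0 := by
    rintro rfl
    exact htop ((Ideal.eq_top_iff_one J).2 (by simpa using hXk))
  have hf1 : f ≠ 1 := by
    rintro rfl
    exact htop ((Ideal.eq_top_iff_one J).2 hfJ)
  have hm : f.natDegree ≠ 0 := fun h => hf1 (hf.natDegree_eq_zero.mp h)
  set m := f.natDegree with hmdef
  set mkq := Ideal.Quotient.mkₐ ℂ J with hmkq
  let gen : ℕ × ℕ → (Polynomial (PowerSeries ℂ) ⧸ J) := fun ji =>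
    mkq (Polynomial.C ((PowerSeries.X : PowerSeries ℂ) ^ ji.1) * Polynomial.X ^ ji.2)
  set S : Finset (Polynomial (PowerSeries ℂ) ⧸ J) :=
    ((Finset.range k) ×ˢ (Finset.range m)).image gen with hS
  have key : ∀ (r : PowerSeries ℂ) (i : ℕ), i < m →
      mkq (Polynomial.C r * Polynomial.X ^ i) ∈ Submodule.span ℂ (S : Set _) := by
    intro r i hi
    set t := PowerSeries.trunc k r with ht
    have hdvd : (PowerSeries.X : PowerSeries ℂ) ^ k ∣ (r - (t : PowerSeries ℂ)) := by
      rw [PowerSeries.X_pow_dvd_iff]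
      intro j hj
      simp [Polynomial.coeff_coe, ht, PowerSeries.coeff_trunc, hj]
    obtain ⟨s, hs⟩ := hdvd
    have hr : r = (t : PowerSeries ℂ) + (PowerSeries.X : PowerSeries ℂ) ^ k * s := by
      rw [← hs]; ring
    have hcoe : (t : PowerSeries ℂ)
        = ∑ j ∈ Finset.range k, (t.coeff j) • (PowerSeries.X : PowerSeries ℂ) ^ j := by
      ext n
      rw [map_sum]
      simp only [map_smul, PowerSeries.coeff_X_pow, smul_eq_mul, mul_ite, mul_one, mul_zero]
      rw [Finset.sum_ite_eq (Finset.range k) n (fun j => t.coeff j)]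
      simp only [Polynomial.coeff_coe, ht, PowerSeries.coeff_trunc, Finset.mem_range]
      split_ifs <;> simp
    have hsplit : Polynomial.C r * Polynomial.X ^ i
        = (∑ j ∈ Finset.range k,
            (t.coeff j) • (Polynomial.C ((PowerSeries.X : PowerSeries ℂ) ^ j)
              * Polynomial.X ^ i))
          + Polynomial.C ((PowerSeries.X : PowerSeries ℂ) ^ k)
            * (Polynomial.C s * Polynomial.X ^ i) := by
      rw [hr, map_add, hcoe, map_sum, add_mul]
      congr 1
      · rw [Finset.sum_mul]
        exact Finset.sum_congr rfl fun j _ => by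
          rw [← Polynomial.smul_C, smul_mul_assoc]
      · rw [map_mul]; ring
    rw [hsplit, map_add, map_sum]
    have h0 : mkq (Polynomial.C ((PowerSeries.X : PowerSeries ℂ) ^ k)
        * (Polynomial.C s * Polynomial.X ^ i)) = 0 := by
      rw [hmkq, Ideal.Quotient.mkₐ_eq_mk, Ideal.Quotient.eq_zero_iff_mem]
      exact Ideal.mul_mem_right _ _ hXk
    rw [h0, add_zero]
    refine Submodule.sum_mem _ fun j hj => ?_
    rw [map_smul]
    refine Submodule.smul_mem _ _ (Submodule.subset_span ?_)
    exact Finset.mem_coe.mpr (Finset.mem_image.mpr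
      ⟨(j, i), Finset.mem_product.mpr ⟨hj, Finset.mem_range.mpr hi⟩, rfl⟩)
  refine ⟨⟨S, ?_⟩⟩
  rw [eq_top_iff]
  rintro x -
  obtain ⟨p, rfl⟩ := Ideal.Quotient.mk_surjective x
  have hmk : Ideal.Quotient.mk J p = mkq p := by rw [hmkq, Ideal.Quotient.mkₐ_eq_mk]
  have hmod : mkq p = mkq (p %ₘ f) := by
    have hsub : p - p %ₘ f ∈ J := by
      have h1 : p - p %ₘ f = f * (p /ₘ f) := by
        have h0 := Polynomial.modByMonic_add_div p f
        linear_combination -h0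
      rw [h1]
      exact Ideal.mul_mem_right _ _ hfJ
    rw [hmkq]
    simp only [Ideal.Quotient.mkₐ_eq_mk]
    exact Ideal.Quotient.eq.mpr hsub
  have hdeg : (p %ₘ f).natDegree < m := Polynomial.natDegree_modByMonic_lt p hf hf1
  have hrepr : p %ₘ f = ∑ i ∈ Finset.range m,
      Polynomial.C ((p %ₘ f).coeff i) * Polynomial.X ^ i := by
    conv_lhs => rw [Polynomial.as_sum_range' _ m hdeg]
    exact Finset.sum_congr rfl fun i _ => (Polynomial.C_mul_X_pow_eq_monomial).symm
  rw [hmk, hmod, hrepr, map_sum]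
  exact Submodule.sum_mem _ fun i hi => key _ i (Finset.mem_range.mp hi)

local notation "𝕂" => FractionRing (PowerSeries ℂ)
local notation "φm" => algebraMap (PowerSeries ℂ) (FractionRing (PowerSeries ℂ))

set_option synthInstance.maxHeartbeats 1000000 in
set_option maxHeartbeats 4000000 in
theorem stmt15 (f g : Polynomial (PowerSeries ℂ))
    (hWf : IsWeierstrass f) (hWg : IsWeierstrass g) :
    Module.Finite ℂ (Polynomial (PowerSeries ℂ) ⧸ Ideal.span {f, g}) ↔ IsRelPrime f g := by
  constructor
  · intro hfin d hdf hdg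
    have hf0 : f ≠ 0 := hWf.1.ne_zero
    have hd0 : d ≠ 0 := by rintro rfl; exact hf0 (zero_dvd_iff.mp hdf)
    obtain ⟨e, he⟩ := hdf
    have hl : d.leadingCoeff * e.leadingCoeff = 1 := by
      rw [← Polynomial.leadingCoeff_mul, ← he]; exact hWf.1
    obtain ⟨w, hw⟩ := IsUnit.of_mul_eq_one _ hl
    set d' := Polynomial.C ((↑w⁻¹ : PowerSeries ℂ)) * d with hd'
    have hdeq : d = Polynomial.C (↑w : PowerSeries ℂ) * d' := by
      rw [hd', ← mul_assoc, ← Polynomial.C_mul, Units.mul_inv, Polynomial.C_1, one_mul]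
    have hdd' : d' ∣ d := Dvd.intro_left _ hdeq.symm
    have hmon : d'.Monic := by
      have : d'.leadingCoeff = 1 := by
        rw [hd', Polynomial.leadingCoeff_mul, Polynomial.leadingCoeff_C, ← hw, Units.inv_mul]
      exact this
    by_cases hdeg0 : d'.natDegree = 0
    · have hd1 : d' = 1 := hmon.natDegree_eq_zero.mp hdeg0
      rw [hdeq, hd1, mul_one]
      exact Polynomial.isUnit_C.mpr w.isUnit
    · exfalso
      have hle : Ideal.span {f, g} ≤ Ideal.span {d'} := by
        rw [Ideal.span_le]
        rintro x hx
        rcases hx with rfl | hx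
        · exact Ideal.mem_span_singleton.mpr (hdd'.trans ⟨e, he⟩)
        · rw [Set.mem_singleton_iff] at hx; subst hx
          exact Ideal.mem_span_singleton.mpr (hdd'.trans hdg)
      haveI hfin' := finite_quot_of_le hle hfin
      let L : PowerSeries ℂ →ₗ[ℂ] (Polynomial (PowerSeries ℂ) ⧸ Ideal.span {d'}) :=
        { toFun := fun r => Ideal.Quotient.mkₐ ℂ _ (Polynomial.C r)
          map_add' := fun a b => by simp [map_add]
          map_smul' := fun c r => by
            simp only [RingHom.id_apply]
            rw [← Polynomial.smul_C, map_smul] }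
      have hinj : Function.Injective L := by
        rw [injective_iff_map_eq_zero]
        intro r hr
        have hr' : Ideal.Quotient.mk (Ideal.span {d'}) (Polynomial.C r) = 0 := by
          rw [← Ideal.Quotient.mkₐ_eq_mk ℂ]; exact hr
        rw [Ideal.Quotient.eq_zero_iff_mem, Ideal.mem_span_singleton] at hr'
        by_contra hr0
        have hle' := Polynomial.natDegree_le_of_dvd hr' (Polynomial.C_ne_zero.mpr hr0)
        rw [Polynomial.natDegree_C] at hle'
        omega
      exact aux_not_fin (FiniteDimensional.of_injective L hinj)
  · intro hrel
    have hinjφ : Function.Injective φm := IsFractionRing.injective _ _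
    have hmapinj : Function.Injective (Polynomial.map φm) := Polynomial.map_injective _ hinjφ
    have hrelK : IsRelPrime (f.map φm) (g.map φm) := by
      intro d hdf hdg
      have hfK : (f.map φm).Monic := hWf.1.map _
      have hd0 : d ≠ 0 := by rintro rfl; exact hfK.ne_zero (zero_dvd_iff.mp hdf)
      have hl : d.leadingCoeff ≠ 0 := Polynomial.leadingCoeff_ne_zero.mpr hd0
      obtain ⟨e, he⟩ := IsIntegrallyClosed.eq_map_mul_C_of_dvd 𝕂 hWf.1 hdf
      have hemap : e.map φm = d * Polynomial.C d.leadingCoeff⁻¹ := by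
        have h2 := congrArg (fun z => z * Polynomial.C d.leadingCoeff⁻¹) he
        simpa [mul_assoc, ← Polynomial.C_mul, mul_inv_cancel₀ hl] using h2
      have hemonic : (e.map φm).Monic := by
        rw [hemap]; exact Polynomial.monic_mul_leadingCoeff_inv hd0
      have heM : e.Monic := Polynomial.monic_of_injective hinjφ hemonic
      have hef : e ∣ f :=
        hWf.1.dvd_of_fraction_map_dvd_fraction_map heM (dvd_trans ⟨_, he.symm⟩ hdf)
      have heg : e ∣ g :=
        hWg.1.dvd_of_fraction_map_dvd_fraction_map heM (dvd_trans ⟨_, he.symm⟩ hdg)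
      have hue : IsUnit e := hrel hef heg
      rw [← he]
      refine IsUnit.mul ?_ (Polynomial.isUnit_C.mpr (isUnit_iff_ne_zero.mpr hl))
      have := hue.map (Polynomial.mapRingHom φm)
      simpa using this
    haveI hpir : IsPrincipalIdealRing (Polynomial 𝕂) := EuclideanDomain.to_principal_ideal_domain (R := Polynomial 𝕂)
    haveI : (Ideal.span ({f.map φm, g.map φm} : Set (Polynomial 𝕂))).IsPrincipal :=
      IsPrincipalIdealRing.principal _
    obtain ⟨a, b, hab⟩ := hrelK.isCoprime
    obtain ⟨ca, hca⟩ :=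
      IsLocalization.integerNormalization_map_to_map (nonZeroDivisors (PowerSeries ℂ)) a
    obtain ⟨cb, hcb⟩ :=
      IsLocalization.integerNormalization_map_to_map (nonZeroDivisors (PowerSeries ℂ)) b
    set a' := IsLocalization.integerNormalization (nonZeroDivisors (PowerSeries ℂ)) a with ha'
    set b' := IsLocalization.integerNormalization (nonZeroDivisors (PowerSeries ℂ)) b with hb'
    have hc0 : (↑ca * ↑cb : PowerSeries ℂ) ≠ 0 :=
      mul_ne_zero (nonZeroDivisors.ne_zero ca.2) (nonZeroDivisors.ne_zero cb.2)
    have hsm : ∀ (r : PowerSeries ℂ) (p : Polynomial 𝕂), r • p = Polynomial.C (φm r) * p := by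
      intro r p
      rw [← IsScalarTower.algebraMap_smul 𝕂 r p, Polynomial.smul_eq_C_mul]
    have hmem : Polynomial.C (↑ca * ↑cb : PowerSeries ℂ) ∈ Ideal.span {f, g} := by
      have hh : Polynomial.C (↑cb : PowerSeries ℂ) * a' * f
          + Polynomial.C (↑ca : PowerSeries ℂ) * b' * g
          = Polynomial.C (↑ca * ↑cb : PowerSeries ℂ) := by
        apply hmapinj
        rw [Polynomial.map_add, Polynomial.map_mul, Polynomial.map_mul, Polynomial.map_mul,
          Polynomial.map_mul, Polynomial.map_C, Polynomial.map_C, Polynomial.map_C, hca, hcb,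
          hsm, hsm]
        calc Polynomial.C (φm ↑cb) * (Polynomial.C (φm ↑ca) * a) * f.map φm
              + Polynomial.C (φm ↑ca) * (Polynomial.C (φm ↑cb) * b) * g.map φm
            = Polynomial.C (φm ↑ca) * Polynomial.C (φm ↑cb)
                * (a * f.map φm + b * g.map φm) := by ring
          _ = Polynomial.C (φm ↑ca) * Polynomial.C (φm ↑cb) := by rw [hab, mul_one]
          _ = Polynomial.C (φm (↑ca * ↑cb)) := by rw [map_mul, map_mul]
      rw [← hh]
      refine Ideal.add_mem _ ?_ ?_
      · exact Ideal.mul_mem_left _ _ (Ideal.subset_span (Set.mem_insert _ _))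
      · exact Ideal.mul_mem_left _ _
          (Ideal.subset_span (Set.mem_insert_of_mem _ (Set.mem_singleton _)))
    obtain ⟨k, u, hcu⟩ :=
      IsDiscreteValuationRing.eq_unit_mul_pow_irreducible hc0 PowerSeries.X_irreducible
    have hXk : Polynomial.C ((PowerSeries.X : PowerSeries ℂ) ^ k) ∈ Ideal.span {f, g} := by
      have hx : ((PowerSeries.X : PowerSeries ℂ) ^ k) = ↑u⁻¹ * (↑ca * ↑cb) := by
        rw [hcu, ← mul_assoc, Units.inv_mul, one_mul]
      rw [hx, map_mul]
      exact Ideal.mul_mem_left _ _ hmem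
    exact aux_span_finite _ hWf.1 (Ideal.subset_span (Set.mem_insert _ _)) hXk
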